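/- Let n be an odd positive integer and q = 2^n, and let ∘ denote the symplectic Knuth presemifield multiplication on F_q. For a ∈ F_q, the set {m ∈ F_q : a ∘ (m^{2^{n-1}} + m) + m = 0} has exactly 1 element if a ∈ {0,1}, and exactly 2 elements if a ∉ {0,1}. (This expresses that the set of lines {l_{m^{2^{n-1}}+m, m} : m ∈ F_q} ∪ {l_0, l_1} is a line hyperoval in the symplectic presemifield plane Π(K_n^{td}).) -/

import Mathlib

set_option linter.unusedSectionVars false
set_option linter.unusedVariables false
set_option maxHeartbeats 1000000

open Finset Polynomial

section AuxLemmas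

variable {F : Type*} [Field F]

private lemma sq_add' (h2 : (2:F) = 0) (x y : F) : (x + y)^2 = x^2 + y^2 := by
  linear_combination x * y * h2

private lemma pow_two_pow_add' (h2 : (2:F) = 0) (x y : F) (k : ℕ) :
    (x + y)^(2^k) = x^(2^k) + y^(2^k) := by
  induction k with
  | zero => simp
  | succ k ih =>
      rw [pow_succ 2 k, pow_mul, pow_mul, pow_mul, ih, sq_add' h2]

private lemma sq_sum' (h2 : (2:F) = 0) (m : ℕ) (f : ℕ → F) :
    (∑ i ∈ range m, f i)^2 = ∑ i ∈ range m, (f i)^2 := by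
  induction m with
  | zero => simp
  | succ m ih => rw [sum_range_succ, sum_range_succ, sq_add' h2, ih]

variable (n : ℕ) [Fintype F] (Tr : F → F)

private lemma char_two' (hn0 : 0 < n) (hF : Fintype.card F = 2 ^ n) : (2:F) = 0 := by
  have h := FiniteField.cast_card_eq_zero F
  rw [hF] at h
  push_cast at h
  exact pow_eq_zero_iff hn0.ne' |>.mp h

variable (hTr : ∀ x : F, Tr x = ∑ i ∈ Finset.range n, x ^ 2 ^ i)

include hTr

private lemma Tr_add (h2 : (2:F) = 0) (x y : F) : Tr (x + y) = Tr x + Tr y := by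
  rw [hTr, hTr, hTr, ← Finset.sum_add_distrib]
  exact Finset.sum_congr rfl fun i _ => pow_two_pow_add' h2 x y i

private lemma Tr_zero : Tr 0 = 0 := by
  rw [hTr]
  apply Finset.sum_eq_zero
  intro i _
  exact zero_pow (Nat.pos_of_ne_zero (by positivity)).ne'

private lemma Tr_sq (hF : Fintype.card F = 2 ^ n) (x : F) : Tr (x ^ 2) = Tr x := by
  have hq : x ^ 2 ^ n = x := by rw [← hF]; exact FiniteField.pow_card x
  have e1 : ∀ i : ℕ, (x^2) ^ 2^i = x ^ 2 ^ (i+1) := by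
    intro i
    rw [← pow_mul, pow_succ']
  have h1 : ∑ i ∈ range (n+1), x ^ 2^i = Tr (x^2) + x ^ 2^0 := by
    rw [Finset.sum_range_succ']
    congr 1
    rw [hTr]
    exact Finset.sum_congr rfl fun i _ => (e1 i).symm
  have h2' : ∑ i ∈ range (n+1), x ^ 2^i = Tr x + x := by
    rw [Finset.sum_range_succ, hTr, hq]
  rw [h1, pow_zero, pow_one] at h2'
  exact add_right_cancel h2'

private lemma Tr_idem (h2 : (2:F) = 0) (hF : Fintype.card F = 2 ^ n) (x : F) :
    Tr x ^ 2 = Tr x := by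
  have h : Tr x ^ 2 = Tr (x ^ 2) := by
    rw [hTr, hTr, sq_sum' h2]
    apply Finset.sum_congr rfl
    intro i _
    rw [← pow_mul, ← pow_mul, Nat.mul_comm]
  rw [h, Tr_sq n Tr hTr hF]

private lemma Tr_cases (h2 : (2:F) = 0) (hF : Fintype.card F = 2 ^ n) (x : F) :
    Tr x = 0 ∨ Tr x = 1 := by
  have h := Tr_idem n Tr hTr h2 hF x
  have h' : Tr x * (Tr x - 1) = 0 := by linear_combination h
  rcases mul_eq_zero.mp h' with h'' | h''
  · exact Or.inl h''
  · exact Or.inr (by linear_combination h'')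

private lemma Tr_one (h2 : (2:F) = 0) (hn : Odd n) : Tr 1 = 1 := by
  rw [hTr]
  simp only [one_pow, Finset.sum_const, Finset.card_range, nsmul_eq_mul, mul_one]
  obtain ⟨k, hk⟩ := hn
  subst hk
  push_cast
  linear_combination (k : F) * h2

private lemma AS_exists (hn0 : 0 < n) (hF : Fintype.card F = 2 ^ n)
    (h2 : (2:F) = 0)
    (c : F) (hc : Tr c = 0) : ∃ w : F, w^2 + w = c := by
  classical
  have hTradd := Tr_add n Tr hTr h2
  have hTrsq := Tr_sq n Tr hTr hF
  set φ : F → F := fun w => w^2 + w with hφ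
  set I : Finset F := Finset.image φ Finset.univ with hI
  set K : Finset F := Finset.univ.filter (fun x => Tr x = 0) with hK
  have hIK : I ⊆ K := by
    intro x hx
    simp only [hI, Finset.mem_image] at hx
    obtain ⟨w, _, rfl⟩ := hx
    simp only [hK, Finset.mem_filter, Finset.mem_univ, true_and, hφ]
    rw [hTradd, hTrsq]
    linear_combination Tr w * h2
  set p : F[X] := ∑ i ∈ Finset.range n, X ^ 2 ^ i with hp
  have hpne : p ≠ 0 := by
    intro h
    have hco : p.coeff (2^(n-1)) = 1 := by
      rw [hp, Polynomial.finset_sum_coeff]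
      have hh : ∀ i ∈ Finset.range n, (X ^ 2^i : F[X]).coeff (2^(n-1)) =
          if i = n-1 then 1 else 0 := by
        intro i _
        rw [Polynomial.coeff_X_pow]
        congr 1
        simp only [eq_iff_iff]
        constructor
        · intro h'
          exact (Nat.pow_right_injective (le_refl 2) h'.symm)
        · intro h'; rw [h']
      rw [Finset.sum_congr rfl hh, Finset.sum_ite_eq' (Finset.range n) (n-1)]
      simp [Nat.sub_lt hn0]
    rw [h] at hco
    simp at hco
  have hdeg : p.natDegree ≤ 2^(n-1) := by
    rw [hp]
    apply Polynomial.natDegree_sum_le_of_forall_le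
    intro i hi
    rw [Polynomial.natDegree_X_pow]
    have := Finset.mem_range.mp hi
    exact Nat.pow_le_pow_right (by norm_num) (by omega : i ≤ n-1)
  have hKcard : K.card ≤ 2^(n-1) := by
    have hsub : K ⊆ p.roots.toFinset := by
      intro x hx
      simp only [hK, Finset.mem_filter] at hx
      rw [Multiset.mem_toFinset, Polynomial.mem_roots hpne]
      simp only [Polynomial.IsRoot, hp]
      rw [Polynomial.eval_finset_sum]
      simp only [Polynomial.eval_pow, Polynomial.eval_X]
      rw [← hTr x]
      exact hx.2
    calc K.card ≤ p.roots.toFinset.card := Finset.card_le_card hsub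
      _ ≤ Multiset.card p.roots := p.roots.toFinset_card_le
      _ ≤ p.natDegree := p.card_roots'
      _ ≤ 2^(n-1) := hdeg
  have hfib : ∀ a ∈ Finset.univ.image φ, (Finset.univ.filter (fun w => φ w = a)).card ≤ 2 := by
    intro a ha
    obtain ⟨w, _, hw⟩ := Finset.mem_image.mp ha
    have hsub : (Finset.univ.filter (fun w' => φ w' = a)) ⊆ {w, w + 1} := by
      intro w' hw'
      simp only [Finset.mem_filter, Finset.mem_univ, true_and] at hw'
      have h0 : (w' + w) * (w' + w + 1) = 0 := by
        have hww : φ w' = φ w := by rw [hw', hw]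
        simp only [hφ] at hww
        linear_combination hww + (w*w' + w^2 + w) * h2
      simp only [Finset.mem_insert, Finset.mem_singleton]
      rcases mul_eq_zero.mp h0 with h | h
      · left; linear_combination h - w * h2
      · right; linear_combination h - (w+1) * h2
    calc _ ≤ ({w, w+1} : Finset F).card := Finset.card_le_card hsub
      _ ≤ 2 := Finset.card_insert_le _ _ |>.trans (by simp)
  have hcard_le : Fintype.card F ≤ 2 * I.card := by
    have h := Finset.card_le_mul_card_image (f := φ) (Finset.univ : Finset F) 2 hfib
    rw [Finset.card_univ] at h
    exact h
  have hIcard : 2^(n-1) ≤ I.card := by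
    have h1 : 2^n = 2 * 2^(n-1) := by
      rw [← pow_succ']
      congr 1
      omega
    rw [hF, h1] at hcard_le
    exact Nat.le_of_mul_le_mul_left hcard_le (by norm_num)
  have hKI : K = I := (Finset.eq_of_subset_of_card_le hIK (hKcard.trans hIcard)).symm
  have hcK : c ∈ K := by simp [hK, hc]
  rw [hKI] at hcK
  obtain ⟨w, _, hw⟩ := Finset.mem_image.mp hcK
  exact ⟨w, hw⟩

omit hTr

private lemma cube_root_exists (hn : Odd n) (hF : Fintype.card F = 2 ^ n)
    (z : F) : ∃ y : F, y^3 = z := by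
  have hcop : Nat.Coprime 3 (Fintype.card F - 1) := by
    rw [hF]
    rw [Nat.coprime_comm]
    apply Nat.Coprime.symm
    rw [Nat.Prime.coprime_iff_not_dvd Nat.prime_three]
    intro hdvd
    have h1 : (1:ℕ) ≤ 2^n := Nat.one_le_two_pow
    have hz : ((2^n - 1 : ℕ) : ZMod 3) = 0 := by
      exact_mod_cast (ZMod.natCast_eq_zero_iff _ 3).mpr hdvd
    rw [Nat.cast_sub h1] at hz
    push_cast at hz
    have h2 : ((2 : ZMod 3))^n = -1 := by
      have h3 : (2 : ZMod 3) = -1 := by decide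
      rw [h3, hn.neg_one_pow]
    rw [h2] at hz
    have h4 : (-2 : ZMod 3) = 0 := by linear_combination hz
    revert h4
    decide
  have hinj : Function.Injective (fun x : F => x ^ 3) := by
    intro x y h
    simp only at h
    rcases eq_or_ne y 0 with rfl | hy
    · rw [zero_pow (by norm_num)] at h
      exact pow_eq_zero_iff (by norm_num : (3:ℕ) ≠ 0) |>.mp h
    · have hx : x ≠ 0 := by
        intro hx0
        rw [hx0, zero_pow (by norm_num)] at h
        exact hy (pow_eq_zero_iff (by norm_num : (3:ℕ) ≠ 0) |>.mp h.symm)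
      have ht : (x * y⁻¹) ^ 3 = 1 := by
        field_simp
        exact h
      have h3 : orderOf (x * y⁻¹) ∣ 3 := orderOf_dvd_of_pow_eq_one ht
      have hq : orderOf (x * y⁻¹) ∣ Fintype.card F - 1 := by
        apply orderOf_dvd_of_pow_eq_one
        exact FiniteField.pow_card_sub_one_eq_one _ (mul_ne_zero hx (inv_ne_zero hy))
      have hord : orderOf (x * y⁻¹) ∣ Nat.gcd 3 (Fintype.card F - 1) := Nat.dvd_gcd h3 hq
      rw [hcop] at hord
      have h5 : x * y⁻¹ = 1 := orderOf_eq_one_iff.mp (Nat.eq_one_of_dvd_one hord ▸ rfl)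
      field_simp at h5
      exact h5
  exact Finite.surjective_of_injective hinj z

private lemma cubic_exists_unique
    (Tr : F → F) (h2 : (2:F) = 0)
    (hTradd : ∀ x y : F, Tr (x+y) = Tr x + Tr y)
    (hTrsq : ∀ x : F, Tr (x^2) = Tr x)
    (hTr1 : Tr 1 = 1)
    (hAS : ∀ c : F, Tr c = 0 → ∃ w : F, w^2 + w = c)
    (hcube : ∀ z : F, ∃ y : F, y^3 = z)
    (B : F) (hB : B ≠ 0) (hTrB : Tr B = 0) :
    ∃ x₀ : F, (B^2*x₀^3 + B^2*x₀ + 1 = 0) ∧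
      ∀ x : F, B^2*x^3 + B^2*x + 1 = 0 → x = x₀ := by
  have hB2 : B^2 ≠ 0 := pow_ne_zero _ hB
  have hTrB4 : Tr (B^4) = 0 := by
    have h : (B^4) = (B^2)^2 := by ring
    rw [h, hTrsq, hTrsq]; exact hTrB
  obtain ⟨w, hw⟩ := hAS (B^4) hTrB4
  set z : F := w / B^2 with hzdef
  have hz : B^2 * z^2 + z + B^2 = 0 := by
    rw [hzdef]
    field_simp
    linear_combination hw + B^4 * h2
  have hz0 : z ≠ 0 := by
    intro h
    rw [h] at hz
    simp at hz
    exact hB hz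
  obtain ⟨y, hy⟩ := hcube z
  have hy0 : y ≠ 0 := by rintro rfl; rw [zero_pow (by norm_num)] at hy; exact hz0 hy.symm
  have hy1 : y ≠ 1 := by
    rintro rfl
    rw [one_pow] at hy
    rw [← hy] at hz
    have h1 : (1:F) = 0 := by linear_combination hz - B^2 * h2
    simp at h1
  have hy1' : y + 1 ≠ 0 := by
    intro h
    apply hy1
    linear_combination h - h2
  have hz6 : B ^ 2 * y ^ 6 + y ^ 3 + B ^ 2 = 0 := by
    have h := hz
    rw [← hy] at h
    linear_combination h
  set x₀ : F := y + y⁻¹ with hx₀def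
  have hroot : B^2*x₀^3 + B^2*x₀ + 1 = 0 := by
    rw [hx₀def]
    field_simp
    linear_combination hz6 + (2*B^2*y^4 + 2*B^2*y^2) * h2
  refine ⟨x₀, hroot, ?_⟩
  intro x hx
  by_contra hne
  have hdiff : (x - x₀) * (B^2*(x^2 + x*x₀ + x₀^2) + B^2) = 0 := by
    linear_combination hx - hroot
  have hquad : x^2 + x*x₀ + x₀^2 + 1 = 0 := by
    rcases mul_eq_zero.mp hdiff with h | h
    · exact absurd (sub_eq_zero.mp h) hne
    · have h3 : B^2 * (x^2 + x*x₀ + x₀^2 + 1) = 0 := by linear_combination h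
      rcases mul_eq_zero.mp h3 with h4 | h4
      · exact absurd h4 hB2
      · exact h4
  have hx₀0 : x₀ ≠ 0 := by
    intro h
    have hyy : y^2 + 1 = y * x₀ := by
      rw [hx₀def]
      field_simp
    rw [h, mul_zero] at hyy
    apply hy1'
    have hsq : (y+1)^2 = 0 := by linear_combination hyy + y * h2
    exact pow_eq_zero_iff (by norm_num : (2:ℕ) ≠ 0) |>.mp hsq
  have hv : (x/x₀)^2 + (x/x₀) = 1 + (x₀⁻¹)^2 := by
    field_simp
    linear_combination hquad - (x₀^2 + 1) * h2
  have hTrv : Tr ((x/x₀)^2 + (x/x₀)) = 0 := by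
    rw [hTradd, hTrsq]
    linear_combination Tr (x/x₀) * h2
  have hu : x₀⁻¹ = ((y+1)⁻¹)^2 + (y+1)⁻¹ := by
    have hmul : x₀ * (((y+1)⁻¹)^2 + (y+1)⁻¹) = 1 := by
      rw [hx₀def]
      field_simp
      linear_combination h2
    exact inv_eq_of_mul_eq_one_right hmul
  have hTrinv : Tr (x₀⁻¹) = 0 := by
    rw [hu, hTradd, hTrsq]
    linear_combination Tr ((y+1)⁻¹) * h2
  have hfinal : Tr (1 + (x₀⁻¹)^2) = 1 := by
    rw [hTradd, hTr1, hTrsq, hTrinv, add_zero]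
  rw [hv, hfinal] at hTrv
  exact one_ne_zero hTrv

end AuxLemmas

/-- Corollary 3.5: in the symplectic Knuth presemifield plane `Π(K_n^{td})`, the set of
lines `{l_{√m + m, m} : m ∈ F_q} ∪ {l_0, l_1}` is a line hyperoval.  Analytically: for
`a ∈ F_q` the equation `a ∘ (m^{2^{n-1}} + m) + m = 0` has exactly `1` solution when
`a ∈ {0,1}` and exactly `2` solutions when `a ∉ {0,1}`. -/
theorem line_hyperoval_type_b
    (n : ℕ) (hn : Odd n) (hn0 : 0 < n)
    {F : Type*} [Field F] [Fintype F] (hF : Fintype.card F = 2 ^ n)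
    (Tr : F → F) (hTr : ∀ x : F, Tr x = ∑ i ∈ Finset.range n, x ^ 2 ^ i)
    (smul : F → F → F)
    (hsmul : ∀ x y : F, smul x y = x * y + Tr x * y ^ 2 ^ (n - 1) + Tr (x ^ 2 * y)) :
    ∀ a : F,
      ((a = 0 ∨ a = 1) →
        ({m : F | smul a (m ^ 2 ^ (n - 1) + m) + m = 0}).ncard = 1) ∧
      (a ≠ 0 → a ≠ 1 →
        ({m : F | smul a (m ^ 2 ^ (n - 1) + m) + m = 0}).ncard = 2) := by
  classical
  have h2 : (2:F) = 0 := char_two' n hn0 hF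
  have hTradd : ∀ x y : F, Tr (x+y) = Tr x + Tr y := Tr_add n Tr hTr h2
  have hTr0 : Tr 0 = 0 := Tr_zero n Tr hTr
  have hTrsq : ∀ x : F, Tr (x^2) = Tr x := Tr_sq n Tr hTr hF
  have hTrid : ∀ x : F, Tr x ^ 2 = Tr x := Tr_idem n Tr hTr h2 hF
  have hTrcases : ∀ x : F, Tr x = 0 ∨ Tr x = 1 := Tr_cases n Tr hTr h2 hF
  have hTr1 : Tr 1 = 1 := Tr_one n Tr hTr h2 hn
  have hAS : ∀ c : F, Tr c = 0 → ∃ w : F, w^2+w = c := AS_exists n Tr hTr hn0 hF h2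
  have hcube : ∀ z : F, ∃ y : F, y^3 = z := cube_root_exists n hn hF
  have hr_sq : ∀ x : F, (x ^ 2^(n-1))^2 = x := by
    intro x
    rw [← pow_mul]
    have he : 2^(n-1)*2 = 2^n := by rw [← pow_succ]; congr 1; omega
    rw [he, ← hF]
    exact FiniteField.pow_card x
  have hr_add : ∀ x y : F, (x+y) ^ 2^(n-1) = x^2^(n-1) + y^2^(n-1) :=
    fun x y => pow_two_pow_add' h2 x y (n-1)
  have hzero_r : (0:F) ^ 2^(n-1) = 0 := zero_pow (Nat.pos_of_ne_zero (by positivity)).ne'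
  intro a
  have hmain : ∀ m : F, (smul a (m ^ 2 ^ (n - 1) + m) + m = 0) ↔
      ((a+1)*m + a*(m^2^(n-1)) + Tr a * ((m^2^(n-1))^2^(n-1) + m^2^(n-1))
        + Tr ((a^4+a^2)*m) = 0) := by
    intro m
    rw [hsmul, hr_add (m^2^(n-1)) m]
    have e2 : Tr (a^2 * m^2^(n-1)) = Tr (a^4*m) := by
      rw [← hTrsq (a^2 * m^2^(n-1))]
      congr 1
      rw [mul_pow, hr_sq m]
      ring
    have e1 : Tr (a^2 * (m^2^(n-1) + m)) = Tr ((a^4+a^2)*m) := by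
      rw [mul_add, hTradd, e2, ← hTradd]
      congr 1
      ring
    rw [e1]
    constructor <;> intro h <;> linear_combination h
  constructor
  · rintro (rfl | rfl)
    · -- a = 0
      have hs0 : ∀ s : F, smul 0 s = 0 := by
        intro s
        rw [hsmul]
        simp [hTr0]
      have hset : {m : F | smul 0 (m ^ 2 ^ (n - 1) + m) + m = 0} = {0} := by
        ext m
        simp only [Set.mem_setOf_eq, Set.mem_singleton_iff, hs0, zero_add]
      rw [hset]
      exact Set.ncard_singleton 0
    · -- a = 1
      have hset : {m : F | smul 1 (m ^ 2 ^ (n - 1) + m) + m = 0} = {0} := by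
        ext m
        simp only [Set.mem_setOf_eq, Set.mem_singleton_iff]
        rw [hmain m, hTr1]
        have hTrarg1 : Tr (((1:F)^4+1^2)*m) = 0 := by
          have harg : ((1:F)^4+1^2)*m = 0 := by linear_combination m * h2
          rw [harg, hTr0]
        rw [hTrarg1]
        constructor
        · intro h
          have hrr : (m^2^(n-1))^2^(n-1) = 0 := by
            linear_combination h - (m + m^2^(n-1)) * h2
          have h5 := hr_sq (m^2^(n-1))
          rw [hrr] at h5
          have h6 := hr_sq m
          rw [← h5] at h6
          simpa using h6.symm
        · rintro rfl
          rw [hzero_r, hzero_r]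
          ring
      rw [hset]
      exact Set.ncard_singleton 0
  · intro ha0 ha1
    have ha1' : a + 1 ≠ 0 := by
      intro h
      exact ha1 (by linear_combination h - h2)
    have hTa2 : Tr (a^2) = Tr a := hTrsq a
    have hTa4 : Tr (a^4) = Tr a := by
      rw [show (a:F)^4 = (a^2)^2 by ring, hTrsq, hTrsq]
    rcases hTrcases a with hc | hc
    · -- Tr a = 0
      have hTrγ : Tr (a^4+a^2) = 0 := by
        rw [hTradd, hTa4, hTa2, hc]; norm_num
      have iff2 : ∀ m : F, (smul a (m ^ 2 ^ (n - 1) + m) + m = 0) ↔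
          ((a+1)^2*m^2 + a^2*m + Tr ((a^4+a^2)*m) = 0) := by
        intro m
        rw [hmain m, hc]
        set rm := m^2^(n-1) with hrm
        have e1 : rm^2 = m := hr_sq m
        have e3 : (Tr ((a^4+a^2)*m))^2 = Tr ((a^4+a^2)*m) := hTrid _
        set ε := Tr ((a^4+a^2)*m) with hε
        set X := (a+1)*m + a*rm + 0*(rm^2^(n-1) + rm) + ε with hX
        have hXsq : X^2 = (a+1)^2*m^2 + a^2*m + ε := by
          rw [hX]
          linear_combination a^2*e1 + e3 + (m*ε + a*rm*ε + a*m*ε + a*m*rm + a^2*m*rm)*h2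
        constructor
        · intro h
          rw [← hXsq, h]
          norm_num
        · intro h
          have h4 : X^2 = 0 := by rw [hXsq]; exact h
          exact pow_eq_zero_iff (by norm_num : (2:ℕ) ≠ 0) |>.mp h4
      have hset : {m : F | smul a (m ^ 2 ^ (n - 1) + m) + m = 0} = {0, a^2/(a+1)^2} := by
        ext m
        simp only [Set.mem_setOf_eq, Set.mem_insert_iff, Set.mem_singleton_iff]
        rw [iff2 m]
        constructor
        · intro h
          rcases hTrcases ((a^4+a^2)*m) with hε | hε
          · rw [hε, add_zero] at h
            have hf : m * ((a+1)^2*m + a^2) = 0 := by linear_combination h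
            rcases mul_eq_zero.mp hf with h' | h'
            · exact Or.inl h'
            · right
              have h'' : (a+1)^2 * m = a^2 := by linear_combination h' - a^2 * h2
              rw [eq_div_iff (pow_ne_zero 2 ha1')]
              linear_combination h''
          · exfalso
            rw [hε] at h
            have hf : (m+1)*((a+1)^2*m+1) = 0 := by
              linear_combination h + (m + a*m) * h2
            rcases mul_eq_zero.mp hf with h' | h'
            · have hm1 : m = 1 := by linear_combination h' - h2
              rw [hm1, mul_one, hTrγ] at hε
              exact zero_ne_one hε
            · have hm : (a+1)^2*m = 1 := by linear_combination h' - h2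
              have harg : (a^4+a^2)*m = a^2 := by
                linear_combination a^2*hm - a^3*m*h2
              rw [harg, hTa2, hc] at hε
              exact zero_ne_one hε
        · rintro (rfl | hm)
          · rw [show (a^4+a^2)*(0:F) = 0 by ring, hTr0]
            ring
          · have harg : (a^4+a^2)*(a^2/(a+1)^2) = a^4 := by
              rw [← mul_div_assoc, div_eq_iff (pow_ne_zero 2 ha1')]
              linear_combination -a^5*h2
            have hdm : (a^2/(a+1)^2)*(a+1)^2 = a^2 := div_mul_cancel₀ _ (pow_ne_zero 2 ha1')
            rw [hm, harg, hTa4, hc, add_zero]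
            linear_combination (a^2/(a+1)^2)*hdm + a^2*(a^2/(a+1)^2)*h2
      rw [hset]
      refine Set.ncard_pair ?_
      intro h
      have hne : a^2/(a+1)^2 ≠ 0 := div_ne_zero (pow_ne_zero 2 ha0) (pow_ne_zero 2 ha1')
      exact hne h.symm
    · -- Tr a = 1
      have hTrγ : Tr (a^4+a^2) = 0 := by
        rw [hTradd, hTa4, hTa2, hc]
        linear_combination h2
      have hTrB : Tr ((a+1)^2) = 0 := by
        rw [hTrsq (a+1), hTradd a 1, hc, hTr1]
        linear_combination h2
      obtain ⟨x₀, hroot, huniq⟩ := cubic_exists_unique Tr h2 hTradd hTrsq hTr1 hAS hcube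
        ((a+1)^2) (pow_ne_zero 2 ha1') hTrB
      have hx₀0 : x₀ ≠ 0 := by
        intro h
        rw [h] at hroot
        simp at hroot
      have hx₀1 : x₀ + 1 ≠ 0 := by
        intro h
        have hx1 : x₀ = 1 := by linear_combination h - h2
        rw [hx1] at hroot
        have h1 : (1:F) = 0 := by linear_combination hroot - (a+1)^4 * h2
        exact one_ne_zero h1
      have iff2 : ∀ m : F, (smul a (m ^ 2 ^ (n - 1) + m) + m = 0) ↔
          (((a+1)^2)^2*m^4 + ((a+1)^2)^2*m^2 + m + Tr ((a^4+a^2)*m) = 0) := by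
        intro m
        rw [hmain m, hc]
        set rm := m^2^(n-1) with hrm
        set rrm := rm^2^(n-1) with hrrm
        have e1 : rm^2 = m := hr_sq m
        have e2 : rrm^2 = rm := hr_sq rm
        have e3 : (Tr ((a^4+a^2)*m))^2 = Tr ((a^4+a^2)*m) := hTrid _
        set ε := Tr ((a^4+a^2)*m) with hεd
        set X := (a+1)*m + a*rm + 1*(rrm + rm) + ε with hX
        have s1 : X^2 = (a+1)^2*m^2 + (a+1)^2*m + rm + ε := by
          rw [hX]
          linear_combination (1 + 2*a + a^2)*e1 + e2 + e3 +
            (rrm*ε + rm*ε + rm*rrm + m*ε + m*rrm + m*rm + a*rm*ε + a*rm*rrm + a*m*ε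
              + a*m*rrm + 2*a*m*rm + a^2*m*rm)*h2
        have s2 : ((a+1)^2*m^2 + (a+1)^2*m + rm + ε)^2
            = ((a+1)^2)^2*m^4 + ((a+1)^2)^2*m^2 + m + ε := by
          linear_combination e1 + e3 + (rm*ε + m*ε*(a+1)^2 + m*rm*(a+1)^2 + m^2*ε*(a+1)^2
            + m^2*rm*(a+1)^2 + m^3*((a+1)^2)^2)*h2
        constructor
        · intro h
          have hX0 : X = 0 := by rw [hX]; linear_combination h
          rw [← s2, ← s1, hX0]
          norm_num
        · intro h
          have h4 : X^4 = 0 := by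
            have hxx : X^4 = (X^2)^2 := by ring
            rw [hxx, s1, s2]
            exact h
          have hX0 : X = 0 := pow_eq_zero_iff (by norm_num : (4:ℕ) ≠ 0) |>.mp h4
          rw [hX] at hX0
          linear_combination hX0
      rcases hTrcases ((a^4+a^2)*x₀) with hτ | hτ
      · -- solution set {0, x₀}
        have hset : {m : F | smul a (m ^ 2 ^ (n - 1) + m) + m = 0} = {0, x₀} := by
          ext m
          simp only [Set.mem_setOf_eq, Set.mem_insert_iff, Set.mem_singleton_iff]
          rw [iff2 m]
          constructor
          · intro h
            rcases hTrcases ((a^4+a^2)*m) with hε | hε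
            · rw [hε, add_zero] at h
              have hf : m * (((a+1)^2)^2*m^3 + ((a+1)^2)^2*m + 1) = 0 := by
                linear_combination h
              rcases mul_eq_zero.mp hf with h' | h'
              · exact Or.inl h'
              · exact Or.inr (huniq m h')
            · exfalso
              rw [hε] at h
              have hf : (m+1)*(((a+1)^2)^2*(m+1)^3 + ((a+1)^2)^2*(m+1) + 1) = 0 := by
                linear_combination h + (((a+1)^2)^2 + 3*m*((a+1)^2)^2 + 3*m^2*((a+1)^2)^2
                  + 2*m^3*((a+1)^2)^2)*h2
              rcases mul_eq_zero.mp hf with h' | h'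
              · have hm1 : m = 1 := by linear_combination h' - h2
                rw [hm1, mul_one, hTrγ] at hε
                exact zero_ne_one hε
              · have hm : m + 1 = x₀ := huniq (m+1) h'
                have hm' : m = x₀ + 1 := by linear_combination hm - h2
                rw [hm', show (a^4+a^2)*(x₀+1) = (a^4+a^2)*x₀ + (a^4+a^2) by ring,
                  hTradd, hτ, hTrγ, add_zero] at hε
                exact zero_ne_one hε
          · rintro (rfl | hm)
            · rw [show (a^4+a^2)*(0:F) = 0 by ring, hTr0]
              ring
            · rw [hm, hτ]
              linear_combination x₀ * hroot
        rw [hset]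
        exact Set.ncard_pair (fun h => hx₀0 h.symm)
      · -- solution set {0, x₀ + 1}
        have hεval : Tr ((a^4+a^2)*(x₀+1)) = 1 := by
          rw [show (a^4+a^2)*(x₀+1) = (a^4+a^2)*x₀ + (a^4+a^2) by ring,
            hTradd, hτ, hTrγ, add_zero]
        have hset : {m : F | smul a (m ^ 2 ^ (n - 1) + m) + m = 0} = {0, x₀ + 1} := by
          ext m
          simp only [Set.mem_setOf_eq, Set.mem_insert_iff, Set.mem_singleton_iff]
          rw [iff2 m]
          constructor
          · intro h
            rcases hTrcases ((a^4+a^2)*m) with hε | hε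
            · rw [hε, add_zero] at h
              have hf : m * (((a+1)^2)^2*m^3 + ((a+1)^2)^2*m + 1) = 0 := by
                linear_combination h
              rcases mul_eq_zero.mp hf with h' | h'
              · exact Or.inl h'
              · exfalso
                have hm := huniq m h'
                rw [hm, hτ] at hε
                exact one_ne_zero hε
            · rw [hε] at h
              have hf : (m+1)*(((a+1)^2)^2*(m+1)^3 + ((a+1)^2)^2*(m+1) + 1) = 0 := by
                linear_combination h + (((a+1)^2)^2 + 3*m*((a+1)^2)^2 + 3*m^2*((a+1)^2)^2
                  + 2*m^3*((a+1)^2)^2)*h2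
              rcases mul_eq_zero.mp hf with h' | h'
              · exfalso
                have hm1 : m = 1 := by linear_combination h' - h2
                rw [hm1, mul_one, hTrγ] at hε
                exact zero_ne_one hε
              · right
                have hm : m + 1 = x₀ := huniq (m+1) h'
                linear_combination hm - h2
          · rintro (rfl | hm)
            · rw [show (a^4+a^2)*(0:F) = 0 by ring, hTr0]
              ring
            · rw [hm, hεval]
              linear_combination x₀ * hroot + (1 + ((a+1)^2)^2 + 3*((a+1)^2)^2*x₀
                + 3*((a+1)^2)^2*x₀^2 + 2*((a+1)^2)^2*x₀^3)*h2
        rw [hset]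
        exact Set.ncard_pair (fun h => hx₀1 h.symm)
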